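/- Let u_ε be defined by ∇u_ε(x,z) = g((x,z)·ν/ε) p + m⁻ where g solves g' = W(g), g(0) = 1/2 with W(g) = |g p₂ + m₂⁻ − (g p₁ + m₁⁻)²/2|/(p₁ n₁) > 0 on (0,1), and m± lie on the parabola, p = m⁺ − m⁻, ν = n = p/|p|. Then the energy density satisfies ε⁻¹(∂_z u_ε − (1/2)(∂ₓ u_ε)²)² = ε (∂ₓ² u_ε)² pointwise (equipartition of energy). -/

import Mathlib

noncomputable def px (f : ℝ × ℝ → ℝ) (p : ℝ × ℝ) : ℝ :=
  deriv (fun s => f (s, p.2)) p.1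

noncomputable def pz (f : ℝ × ℝ → ℝ) (p : ℝ × ℝ) : ℝ :=
  deriv (fun t => f (p.1, t)) p.2

/-- Equipartition of energy for the 1D BPS ansatz: if ∇u_ε is given by the
profile g((x,z)·ν/ε) p + m⁻ with g solving g' = W(g),
W(g) = |g p₂ + m₂⁻ − (g p₁ + m₁⁻)²/2|/(p₁ n₁), then pointwise
ε⁻¹(∂_z u_ε − (1/2)(∂ₓ u_ε)²)² = ε (∂ₓ² u_ε)². -/
theorem stmt_18 (mp1 mp2 mm1 mm2 p1 p2 n1 n2 ε : ℝ) (hε : 0 < ε)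
    (hparp : mp2 = mp1 ^ 2 / 2) (hparm : mm2 = mm1 ^ 2 / 2)
    (hne : (mp1, mp2) ≠ (mm1, mm2))
    (hp1 : p1 = mp1 - mm1) (hp2 : p2 = mp2 - mm2)
    (hn1 : n1 = p1 / Real.sqrt (p1 ^ 2 + p2 ^ 2))
    (hn2 : n2 = p2 / Real.sqrt (p1 ^ 2 + p2 ^ 2))
    (g : ℝ → ℝ)
    (hg : ∀ t, HasDerivAt g
      (|g t * p2 + mm2 - (g t * p1 + mm1) ^ 2 / 2| / (p1 * n1)) t)
    (u : ℝ × ℝ → ℝ)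
    (hux : ∀ q : ℝ × ℝ, px u q = g ((q.1 * n1 + q.2 * n2) / ε) * p1 + mm1)
    (huz : ∀ q : ℝ × ℝ, pz u q = g ((q.1 * n1 + q.2 * n2) / ε) * p2 + mm2) :
    ∀ q : ℝ × ℝ,
      ε⁻¹ * (pz u q - (px u q) ^ 2 / 2) ^ 2 = ε * (px (px u) q) ^ 2 := by
  intro q
  have hp1ne : p1 ≠ 0 := by
    intro h
    apply hne
    have h1 : mp1 = mm1 := by linarith [hp1 ▸ h]
    have : mp2 = mm2 := by rw [hparp, hparm, h1]
    simp [h1, this]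
  have hdenpos : 0 < Real.sqrt (p1 ^ 2 + p2 ^ 2) := by
    apply Real.sqrt_pos.mpr
    positivity
  have hn1ne : n1 ≠ 0 := by
    rw [hn1]
    exact div_ne_zero hp1ne hdenpos.ne'
  set t0 : ℝ := (q.1 * n1 + q.2 * n2) / ε with ht0
  set A : ℝ := g t0 * p2 + mm2 - (g t0 * p1 + mm1) ^ 2 / 2 with hA
  -- inner affine derivative
  have hin : HasDerivAt (fun s : ℝ => (s * n1 + q.2 * n2) / ε) (n1 / ε) q.1 := by
    have : HasDerivAt (fun s : ℝ => s * n1 + q.2 * n2) n1 q.1 :=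
      by simpa using ((hasDerivAt_id q.1).mul_const n1).add_const (q.2 * n2)
    simpa using this.div_const ε
  have hcomp : HasDerivAt (fun s : ℝ => g ((s * n1 + q.2 * n2) / ε))
      (|A| / (p1 * n1) * (n1 / ε)) q.1 := (hg t0).comp q.1 hin
  have hfull : HasDerivAt (fun s : ℝ => g ((s * n1 + q.2 * n2) / ε) * p1 + mm1)
      (|A| / (p1 * n1) * (n1 / ε) * p1) q.1 := (hcomp.mul_const p1).add_const _
  have hpx2 : px (px u) q = |A| / (p1 * n1) * (n1 / ε) * p1 := by
    have hfun : (fun s : ℝ => px u (s, q.2)) =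
        fun s : ℝ => g ((s * n1 + q.2 * n2) / ε) * p1 + mm1 := by
      funext s; exact hux (s, q.2)
    rw [px, hfun]
    exact hfull.deriv
  have hval : |A| / (p1 * n1) * (n1 / ε) * p1 = |A| / ε := by
    field_simp
  rw [hpx2, hval, hux q, huz q, ← ht0]
  rw [div_pow, sq_abs]
  field_simp
  ring
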